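/- Let f : {0,...,N−1} → ℝ be strictly increasing with strictly convex discrete profile (i.e., Δf(i) = f(i)−f(i−1) strictly increasing). If a_0 = 0 < a_1 < ... < a_K = N minimizes A(a) = Σ_{i=0}^{N-1} f(i) − Σ_{k=0}^{K-1} (a_{k+1}−a_k) f(a_k) over all strictly increasing integer schedules from 0 to N of length K, then the increments s_k = a_k − a_{k−1} are non-increasing in k. -/

import Mathlib

/-- Telescoping convexity bound: `f n - f (n - d) ≤ d * (f n - f (n-1))`. -/
lemma stmt19_tel (N : ℕ) (f : ℕ → ℝ)
    (hconv : ∀ i j, 1 ≤ i → i < j → j ≤ N - 1 →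
        f i - f (i - 1) < f j - f (j - 1)) :
    ∀ d n, 1 ≤ d → d ≤ n → n ≤ N - 1 →
      f n - f (n - d) ≤ (d : ℝ) * (f n - f (n - 1)) := by
  intro d
  induction d with
  | zero => intro n h1 _ _; omega
  | succ d ih =>
    intro n h1 h2 h3
    by_cases hd : d = 0
    · subst hd; simp
    · have hd1 : 1 ≤ d := by omega
      have key := ih n hd1 (by omega) h3
      have hstep : f (n - d) - f (n - d - 1) < f n - f (n - 1) :=
        hconv (n - d) n (by omega) (by omega) h3
      have hrw : n - (d + 1) = n - d - 1 := by omega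
      rw [hrw]
      push_cast
      linarith

/-- If `f` is strictly increasing with strictly convex discrete profile (`Δf` strictly
increasing), then any minimizer of the Riemann-sum objective `A` over strictly increasing
integer schedules `0 = a_0 < … < a_K = N` has non-increasing increments `s_k = a_k − a_{k−1}`. -/
theorem stmt19 (N K : ℕ) (hK : 2 ≤ K) (hKN : K ≤ N)
    (f : ℕ → ℝ)
    (hmono : ∀ i, 1 ≤ i → i ≤ N - 1 → f (i - 1) < f i)
    (hconv : ∀ i j, 1 ≤ i → i < j → j ≤ N - 1 →
        f i - f (i - 1) < f j - f (j - 1))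
    (A : (ℕ → ℕ) → ℝ)
    (hA : ∀ b : ℕ → ℕ, A b = (∑ i ∈ Finset.range N, f i)
        - ∑ k ∈ Finset.range K, ((b (k + 1) : ℝ) - (b k : ℝ)) * f (b k))
    (a : ℕ → ℕ) (ha0 : a 0 = 0) (haK : a K = N)
    (hainc : ∀ k < K, a k < a (k + 1))
    (hmin : ∀ b : ℕ → ℕ, b 0 = 0 → b K = N → (∀ k < K, b k < b (k + 1)) → A a ≤ A b) :
    ∀ k, 1 ≤ k → k < K → a (k + 1) - a k ≤ a k - a (k - 1) := by
  -- strict monotonicity of `a` on `[0, K]`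
  have hlt : ∀ m n, m < n → n ≤ K → a m < a n := by
    intro m n
    induction n with
    | zero => omega
    | succ n ih =>
      intro hmn hnK
      rcases Nat.lt_succ_iff_lt_or_eq.mp hmn with h | h
      · exact lt_trans (ih h (by omega)) (hainc n (by omega))
      · rw [h]; exact hainc n (by omega)
  intro k hk1 hkK
  by_contra hcon
  push_neg at hcon
  have hak1 : a (k - 1) < a k := hlt (k - 1) k (by omega) (by omega)
  have hak2 : a k < a (k + 1) := hainc k hkK
  have haKle : a (k + 1) ≤ N := by
    rcases Nat.eq_or_lt_of_le (show k + 1 ≤ K by omega) with h | h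
    · rw [h, haK]
    · have := hlt (k + 1) K h le_rfl; omega
  have ha1 : 1 ≤ a k := by
    have := hlt 0 k (by omega) (by omega); omega
  have hmid : a k + 1 < a (k + 1) := by omega
  -- the modified schedule
  set b : ℕ → ℕ := fun j => if j = k then a k + 1 else a j with hb
  have hb0 : b 0 = 0 := by
    simp only [hb]; rw [if_neg (by omega)]; exact ha0
  have hbK : b K = N := by
    simp only [hb]; rw [if_neg (by omega)]; exact haK
  have hbinc : ∀ j < K, b j < b (j + 1) := by
    intro j hj
    simp only [hb]
    by_cases h1 : j = k
    · subst h1; rw [if_pos rfl, if_neg (by omega)]; omega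
    · rw [if_neg h1]
      by_cases h2 : j + 1 = k
      · rw [if_pos h2]
        have h3 : a j < a (j + 1) := hainc j hj
        rw [h2] at h3
        omega
      · rw [if_neg h2]; exact hainc j hj
  have hle := hmin b hb0 hbK hbinc
  rw [hA a, hA b] at hle
  have hsum : ∑ j ∈ Finset.range K, ((b (j + 1) : ℝ) - b j) * f (b j)
      ≤ ∑ j ∈ Finset.range K, ((a (j + 1) : ℝ) - a j) * f (a j) := by linarith
  -- the two sums agree off `{k-1, k}`
  have hsub : ({k - 1, k} : Finset ℕ) ⊆ Finset.range K := by
    intro x hx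
    simp only [Finset.mem_insert, Finset.mem_singleton] at hx
    rcases hx with h | h <;> simp [Finset.mem_range] <;> omega
  have hdiff : ∑ j ∈ ({k - 1, k} : Finset ℕ),
        ((((a (j + 1) : ℝ) - a j) * f (a j)) - (((b (j + 1) : ℝ) - b j) * f (b j)))
      = ∑ j ∈ Finset.range K,
        ((((a (j + 1) : ℝ) - a j) * f (a j)) - (((b (j + 1) : ℝ) - b j) * f (b j))) := by
    apply Finset.sum_subset hsub
    intro x _ hxs
    simp only [Finset.mem_insert, Finset.mem_singleton, not_or] at hxs
    have hx1 : x ≠ k := hxs.2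
    have hx2 : x + 1 ≠ k := by omega
    simp only [hb, if_neg hx1, if_neg hx2, sub_self]
  have hpair : ∑ j ∈ ({k - 1, k} : Finset ℕ),
        ((((a (j + 1) : ℝ) - a j) * f (a j)) - (((b (j + 1) : ℝ) - b j) * f (b j)))
      = ((((a k : ℝ) - a (k - 1)) * f (a (k - 1))) - (((a k : ℝ) + 1 - a (k - 1)) * f (a (k - 1))))
        + ((((a (k + 1) : ℝ) - a k) * f (a k)) - (((a (k + 1) : ℝ) - (a k + 1)) * f (a k + 1))) := by
    rw [Finset.sum_pair (show k - 1 ≠ k by omega)]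
    have hk' : k - 1 + 1 = k := by omega
    simp only [hb, hk', if_pos rfl, if_neg (show k - 1 ≠ k by omega),
      if_neg (show k + 1 ≠ k by omega)]
    push_cast
    ring
  have hnonneg : (0 : ℝ) ≤ ((((a k : ℝ) - a (k - 1)) * f (a (k - 1))) - (((a k : ℝ) + 1 - a (k - 1)) * f (a (k - 1))))
        + ((((a (k + 1) : ℝ) - a k) * f (a k)) - (((a (k + 1) : ℝ) - (a k + 1)) * f (a k + 1))) := by
    rw [← hpair, hdiff, Finset.sum_sub_distrib]
    linarith [hsum]
  -- analytic contradiction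
  set n := a k
  set m := a (k - 1)
  set p := a (k + 1)
  have hn1 : n + 1 ≤ N - 1 := by omega
  have hn : n ≤ N - 1 := by omega
  have htel := stmt19_tel N f hconv (n - m) n (by omega) (by omega) hn
  rw [show n - (n - m) = m by omega] at htel
  have hDlt : f n - f (n - 1) < f (n + 1) - f (n + 1 - 1) :=
    hconv n (n + 1) ha1 (by omega) hn1
  rw [show n + 1 - 1 = n from rfl] at hDlt
  have hDpos : f (n + 1 - 1) < f (n + 1) := hmono (n + 1) (by omega) hn1
  rw [show n + 1 - 1 = n from rfl] at hDpos
  have hd : ((n - m : ℕ) : ℝ) = (n : ℝ) - m := by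
    push_cast [Nat.cast_sub (le_of_lt hak1)]; ring
  have hd2 : ((n - m : ℕ) : ℝ) + 1 ≤ (p : ℝ) - n := by
    rw [hd]
    have : n - m + 1 ≤ p - n := by omega
    have h2 : ((n - m + 1 : ℕ) : ℝ) ≤ ((p - n : ℕ) : ℝ) := by exact_mod_cast this
    push_cast [Nat.cast_sub (le_of_lt hak1), Nat.cast_sub (le_of_lt hak2)] at h2
    linarith
  rw [hd] at htel
  have hd1 : (1 : ℝ) ≤ (n : ℝ) - m := by
    have : (1 : ℝ) ≤ ((n - m : ℕ) : ℝ) := by exact_mod_cast (show 1 ≤ n - m by omega)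
    rw [hd] at this; exact this
  rw [hd] at hd2
  -- combine
  nlinarith [mul_le_mul_of_nonneg_left (le_of_lt hDlt) (by linarith : (0:ℝ) ≤ (n:ℝ) - m),
    mul_le_mul_of_nonneg_left (le_of_lt hDpos) (by linarith : (0:ℝ) ≤ (p:ℝ) - n - 1 - ((n:ℝ) - m))]
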